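/- Let F be a field of characteristic ≠ 2 and R a simple associative unital F-algebra with an involution * of the first kind, and assume S ⊊ R. If there exist x, y ∈ S such that xy − yx ≠ 0 and xsy ∈ S² for every s ∈ S, then S² = R. -/

import Mathlib

/-- If `R` is simple and there exist `x, y ∈ S` with `xy − yx ≠ 0` and `xSy ⊆ S²`,
then `S² = R`. -/
theorem stmt_9 (F R : Type*) [Field F] [Ring R] [Algebra F R] [StarRing R]
    [IsSimpleRing R]
    (hchar : (2 : F) ≠ 0)
    (hfirst : Set.center R ⊆ {r : R | star r = r})
    (hproper : {r : R | star r = r} ≠ Set.univ)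
    (hxy : ∃ x ∈ {r : R | star r = r}, ∃ y ∈ {r : R | star r = r},
      x * y - y * x ≠ 0 ∧
      ∀ s ∈ {r : R | star r = r}, x * s * y ∈
        AddSubgroup.closure {z : R | ∃ a ∈ {r : R | star r = r},
          ∃ b ∈ {r : R | star r = r}, z = a * b}) :
    (AddSubgroup.closure {z : R | ∃ a ∈ {r : R | star r = r},
        ∃ b ∈ {r : R | star r = r}, z = a * b} : Set R) = Set.univ := by
  obtain ⟨x, hx, y, hy, hxyne, hxsy⟩ := hxy
  simp only [Set.mem_setOf_eq] at hx hy
  set Sgen : Set R := {z : R | ∃ a ∈ {r : R | star r = r},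
      ∃ b ∈ {r : R | star r = r}, z = a * b} with hSgen
  set W : AddSubgroup R := AddSubgroup.closure Sgen with hWdef
  -- products of two symmetric elements are in W
  have hmul : ∀ a b : R, star a = a → star b = b → a * b ∈ W := fun a b ha hb =>
    AddSubgroup.subset_closure ⟨a, ha, b, hb, rfl⟩
  -- symmetric elements are in W
  have hS : ∀ s : R, star s = s → s ∈ W := fun s hs => by
    have := hmul s 1 hs (star_one R)
    rwa [mul_one] at this
  -- for any r, r + star r ∈ W
  have hsymW : ∀ r : R, r + star r ∈ W := fun r =>
    hS _ (by rw [star_add, star_star, add_comm])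
  -- W is star-invariant
  have hstarW : ∀ w ∈ W, star w ∈ W := by
    intro w hw
    induction hw using AddSubgroup.closure_induction with
    | mem z hz =>
      obtain ⟨a, ha, b, hb, rfl⟩ := hz
      rw [star_mul, ha, hb]
      exact hmul b a hb ha
    | zero => simpa using W.zero_mem
    | add u v _ _ hu hv => rw [star_add]; exact W.add_mem hu hv
    | neg u _ hu => rw [star_neg]; exact W.neg_mem hu
  -- the central "half" element
  set h : R := algebraMap F R 2⁻¹ with hhdef
  have hcomm : ∀ r : R, h * r = r * h := fun r => Algebra.commutes _ r
  have hstarh : star h = h := hfirst (Semigroup.mem_center_iff.mpr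
    (fun g => (hcomm g).symm))
  have hhh : h + h = (1 : R) := by
    rw [hhdef, ← map_add, ← map_one (algebraMap F R)]
    congr 1
    field_simp
    norm_num
  have hhalf : ∀ r : R, h * (r + r) = r := fun r => by
    rw [mul_add, ← add_mul, hhh, one_mul]
  -- W is closed under multiplication by h
  have hscale : ∀ w ∈ W, h * w ∈ W := by
    intro w hw
    induction hw using AddSubgroup.closure_induction with
    | mem z hz =>
      obtain ⟨a, ha, b, hb, rfl⟩ := hz
      rw [← mul_assoc]
      exact hmul (h * a) b (by rw [star_mul, ha, hstarh, hcomm]) hb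
    | zero => simpa using W.zero_mem
    | add u v _ _ hu hv => rw [mul_add]; exact W.add_mem hu hv
    | neg u _ hu => rw [mul_neg]; exact W.neg_mem hu
  -- a skew element times a commutator of symmetric elements is in W
  have hqd : ∀ q a b : R, star q = -q → star a = a → star b = b →
      q * (a * b - b * a) ∈ W := by
    intro q a b hq ha hb
    have s1 : q * (a * b - b * a) + (a * b - b * a) * q ∈ W := by
      refine hS _ ?_
      rw [star_add, star_mul, star_mul, star_sub, star_mul, star_mul, ha, hb, hq]
      noncomm_ring
    have c1 : (q * a - a * q) * b ∈ W :=
      hmul _ b (by rw [star_sub, star_mul, star_mul, hq, ha]; noncomm_ring) hb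
    have c2 : a * (q * b - b * q) ∈ W :=
      hmul a _ ha (by rw [star_sub, star_mul, star_mul, hq, hb]; noncomm_ring)
    have c3 : (q * b - b * q) * a ∈ W :=
      hmul _ a (by rw [star_sub, star_mul, star_mul, hq, hb]; noncomm_ring) ha
    have c4 : b * (q * a - a * q) ∈ W :=
      hmul b _ hb (by rw [star_sub, star_mul, star_mul, hq, ha]; noncomm_ring)
    have s2 : q * (a * b - b * a) - (a * b - b * a) * q ∈ W := by
      have heq : q * (a * b - b * a) - (a * b - b * a) * q =
          ((q * a - a * q) * b + a * (q * b - b * q))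
            - ((q * b - b * q) * a + b * (q * a - a * q)) := by noncomm_ring
      rw [heq]
      exact W.sub_mem (W.add_mem c1 c2) (W.add_mem c3 c4)
    have heq : q * (a * b - b * a) = h * ((q * (a * b - b * a) + (a * b - b * a) * q)
        + (q * (a * b - b * a) - (a * b - b * a) * q)) := by
      rw [show (q * (a * b - b * a) + (a * b - b * a) * q)
          + (q * (a * b - b * a) - (a * b - b * a) * q)
          = q * (a * b - b * a) + q * (a * b - b * a) by abel, hhalf]
    rw [heq]
    exact hscale _ (W.add_mem s1 s2)
  -- W is a Lie ideal : [W, R] ⊆ W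
  have hLie : ∀ w ∈ W, ∀ r : R, w * r - r * w ∈ W := by
    intro w hw
    induction hw using AddSubgroup.closure_induction with
    | mem z hz =>
      obtain ⟨a, ha, b, hb, rfl⟩ := hz
      simp only [Set.mem_setOf_eq] at ha hb
      intro r
      set p : R := r + star r with hpdef
      set q : R := r - star r with hqdef
      have hp : star p = p := by rw [hpdef, star_add, star_star, add_comm]
      have hqs : star q = -q := by rw [hqdef, star_sub, star_star]; noncomm_ring
      have wp : a * b * p - p * (a * b) ∈ W := by
        have t1 : a * b * p + p * (b * a) ∈ W := by
          have h0 := hsymW (a * b * p)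
          have heq : a * b * p + star (a * b * p) = a * b * p + p * (b * a) := by
            rw [star_mul, star_mul, hp, ha, hb]
          rwa [heq] at h0
        have t2 : p * (a * b + b * a) ∈ W := by
          refine hmul p _ hp ?_
          rw [star_add, star_mul, star_mul, ha, hb, add_comm]
        have heq : a * b * p - p * (a * b) =
            (a * b * p + p * (b * a)) - p * (a * b + b * a) := by noncomm_ring
        rw [heq]; exact W.sub_mem t1 t2
      have wq : a * b * q - q * (a * b) ∈ W := by
        have t1 : a * b * q - q * (b * a) ∈ W := by
          have h0 := hsymW (a * b * q)
          have heq : a * b * q + star (a * b * q) = a * b * q - q * (b * a) := by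
            rw [star_mul, star_mul, hqs, ha, hb]; noncomm_ring
          rwa [heq] at h0
        have t2 : q * (a * b - b * a) ∈ W := hqd q a b hqs ha hb
        have heq : a * b * q - q * (a * b) =
            (a * b * q - q * (b * a)) - q * (a * b - b * a) := by noncomm_ring
        rw [heq]; exact W.sub_mem t1 t2
      have heq : a * b * r - r * (a * b) =
          h * ((a * b * p - p * (a * b)) + (a * b * q - q * (a * b))) := by
        have : (a * b * p - p * (a * b)) + (a * b * q - q * (a * b))
            = (a * b * r - r * (a * b)) + (a * b * r - r * (a * b)) := by
          rw [hpdef, hqdef]; noncomm_ring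
        rw [this, hhalf]
      rw [heq]
      exact hscale _ (W.add_mem wp wq)
    | zero => intro r; simpa using W.zero_mem
    | add u v _ _ hu hv =>
      intro r
      have heq : (u + v) * r - r * (u + v) = (u * r - r * u) + (v * r - r * v) := by
        noncomm_ring
      rw [heq]; exact W.add_mem (hu r) (hv r)
    | neg u _ hu =>
      intro r
      have heq : (-u) * r - r * (-u) = -(u * r - r * u) := by noncomm_ring
      rw [heq]; exact W.neg_mem (hu r)
  -- every r multiplied by the commutator c = xy - yx lands in W
  set c : R := x * y - y * x with hcdef
  have hE : ∀ r : R, r * c ∈ W := by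
    have hxW : x ∈ W := hS x hx
    have hyW : y ∈ W := hS y hy
    -- symmetric case
    have hEp : ∀ p : R, star p = p → p * c ∈ W := by
      intro p hp
      have w1 : x * p * y ∈ W := hxsy p hp
      have w2 : y * p * x ∈ W := by
        have h0 := hstarW _ w1
        have heq : star (x * p * y) = y * p * x := by
          rw [star_mul, star_mul, hx, hy, hp]; noncomm_ring
        rwa [heq] at h0
      have c1 : p * (x * y) - (x * y) * p ∈ W := hLie p (hS p hp) (x * y)
      have c2 : x * (y * p) - (y * p) * x ∈ W := hLie x hxW (y * p)
      have c3 : p * (y * x) - (y * x) * p ∈ W := hLie p (hS p hp) (y * x)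
      have c4 : y * (x * p) - (x * p) * y ∈ W := hLie y hyW (x * p)
      have heq : p * c = ((p * (x * y) - (x * y) * p) + (x * (y * p) - (y * p) * x)
          + y * p * x) - ((p * (y * x) - (y * x) * p) + (y * (x * p) - (x * p) * y)
          + x * p * y) := by rw [hcdef]; noncomm_ring
      rw [heq]
      exact W.sub_mem (W.add_mem (W.add_mem c1 c2) w2) (W.add_mem (W.add_mem c3 c4) w1)
    -- skew case
    have hEq : ∀ q : R, star q = -q → q * c ∈ W := by
      intro q hq
      have d1 : q * x * y - y * x * q ∈ W := by
        have h0 := hsymW (q * x * y)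
        have heq : q * x * y + star (q * x * y) = q * x * y - y * x * q := by
          rw [star_mul, star_mul, hx, hy, hq]; noncomm_ring
        rwa [heq] at h0
      have d2 : y * (x * q) - (x * q) * y ∈ W := hLie y (hS y hy) (x * q)
      have d3 : x * (q * y) - (q * y) * x ∈ W := hLie x (hS x hx) (q * y)
      have heq : q * c = (q * x * y - y * x * q) + (y * (x * q) - (x * q) * y)
          + (x * (q * y) - (q * y) * x) := by rw [hcdef]; noncomm_ring
      rw [heq]
      exact W.add_mem (W.add_mem d1 d2) d3
    intro r
    have ep : (r + star r) * c ∈ W := hEp _ (by rw [star_add, star_star, add_comm])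
    have eq' : (r - star r) * c ∈ W :=
      hEq _ (by rw [star_sub, star_star]; noncomm_ring)
    have heq : r * c = h * ((r + star r) * c + (r - star r) * c) := by
      have : (r + star r) * c + (r - star r) * c = r * c + r * c := by noncomm_ring
      rw [this, hhalf]
    rw [heq]
    exact hscale _ (W.add_mem ep eq')
  -- sandwiches of c are in W
  have hF : ∀ a b : R, a * c * b ∈ W := by
    intro a b
    have e1 : a * c ∈ W := hE a
    have e2 : (a * c) * b - b * (a * c) ∈ W := hLie (a * c) e1 b
    have e3 : (b * a) * c ∈ W := hE (b * a)
    have heq : a * c * b = ((a * c) * b - b * (a * c)) + (b * a) * c := by noncomm_ring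
    rw [heq]
    exact W.add_mem e2 e3
  -- the two-sided ideal of elements all of whose sandwiches lie in W
  let V : TwoSidedIdeal R := TwoSidedIdeal.mk' {r : R | ∀ a b : R, a * r * b ∈ W}
    (by intro a b; simpa using W.zero_mem)
    (by intro u v hu hv a b
        have heq : a * (u + v) * b = a * u * b + a * v * b := by noncomm_ring
        rw [heq]; exact W.add_mem (hu a b) (hv a b))
    (by intro u hu a b
        have heq : a * (-u) * b = -(a * u * b) := by noncomm_ring
        rw [heq]; exact W.neg_mem (hu a b))
    (by intro t u hu a b
        have heq : a * (t * u) * b = (a * t) * u * b := by noncomm_ring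
        rw [heq]; exact hu (a * t) b)
    (by intro u t hu a b
        have heq : a * (u * t) * b = a * u * (t * b) := by noncomm_ring
        rw [heq]; exact hu a (t * b))
  have hcV : c ∈ V := by
    rw [TwoSidedIdeal.mem_mk']
    exact hF
  have hVtop : V = ⊤ := by
    rcases IsSimpleRing.simple.eq_bot_or_eq_top V with hbot | htop
    · exfalso
      apply hxyne
      have : c ∈ (⊥ : TwoSidedIdeal R) := hbot ▸ hcV
      rwa [TwoSidedIdeal.mem_bot] at this
    · exact htop
  have hall : ∀ r : R, r ∈ W := by
    intro r
    have hrV : r ∈ V := hVtop ▸ TwoSidedIdeal.mem_top R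
    rw [TwoSidedIdeal.mem_mk'] at hrV
    have h11 := hrV 1 1
    rwa [one_mul, mul_one] at h11
  ext r
  simp only [Set.mem_univ, iff_true, SetLike.mem_coe]
  exact hall r
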